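/- Let k ≠ 0 be a real number, let I, J ⊆ ℝ be nonempty open intervals with J nondegenerate, and let F : I × J → ℝ be a C² function. Suppose there is a differentiable function φ : I → ℝ such that F_x(x,y) = φ(x) cos ky and F_y(x,y) = φ(x) sin ky for all (x,y) ∈ I × J. Then there exist real constants C₁ and C₂ such that φ(x) = −k C₁ e^{−kx} and F(x,y) = C₁ e^{−kx} cos ky + C₂ on I × J. -/

import Mathlib

noncomputable section

lemma const_of_deriv_zero' {s : Set ℝ} (hs : Convex ℝ s) (ho : IsOpen s) {f : ℝ → ℝ}
    (hf : ∀ x ∈ s, HasDerivAt f 0 x) {a b : ℝ} (ha : a ∈ s) (hb : b ∈ s) : f a = f b := by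
  apply hs.is_const_of_fderivWithin_eq_zero
    (fun x hx => ((hf x hx).differentiableAt).differentiableWithinAt) ?_ ha hb
  intro x hx
  rw [fderivWithin_of_mem_nhds (ho.mem_nhds hx)]
  rw [(hf x hx).hasFDerivAt.fderiv]; ext; simp

lemma hd_cos (k t : ℝ) : HasDerivAt (fun y => Real.cos (k * y)) (-k * Real.sin (k * t)) t := by
  have := ((hasDerivAt_id t).const_mul k).cos
  exact this.congr_deriv (by show -Real.sin (k * t) * (k * 1) = _; ring)

lemma hd_sin (k t : ℝ) : HasDerivAt (fun y => Real.sin (k * y)) (k * Real.cos (k * t)) t := by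
  have := ((hasDerivAt_id t).const_mul k).sin
  exact this.congr_deriv (by show Real.cos (k * t) * (k * 1) = _; ring)

lemma hd_exp (k t : ℝ) : HasDerivAt (fun y => Real.exp (k * y)) (k * Real.exp (k * t)) t := by
  have := ((hasDerivAt_id t).const_mul k).exp
  exact this.congr_deriv (by show Real.exp (k * t) * (k * 1) = _; ring)

-- on a nondegenerate interval, cos (k·) is not constant
lemma cos_nonconst {k : ℝ} (hk : k ≠ 0) {J : Set ℝ} (hJopen : IsOpen J)
    (hJint : J.OrdConnected) {y₁ y₂ : ℝ} (hy₁ : y₁ ∈ J) (hy₂ : y₂ ∈ J) (hne : y₁ ≠ y₂) :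
    ∃ y₃ ∈ J, ∃ y₄ ∈ J, Real.cos (k * y₃) ≠ Real.cos (k * y₄) := by
  by_contra hcon
  push_neg at hcon
  set a := min y₁ y₂
  set b := max y₁ y₂
  have hab : a < b := min_lt_max.mpr hne
  have hsub : Set.Ioo a b ⊆ J := fun t ht =>
    hJint.uIcc_subset hy₁ hy₂ (by
      rw [Set.uIcc]
      exact Set.Ioo_subset_Icc_self ht)
  have hsin : ∀ t ∈ Set.Ioo a b, Real.sin (k * t) = 0 := by
    intro t ht
    have h1 : HasDerivAt (fun y => Real.cos (k * y)) 0 t := by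
      refine (hasDerivAt_const t (Real.cos (k * y₁))).congr_of_eventuallyEq ?_
      filter_upwards [isOpen_Ioo.mem_nhds ht] with z hz
      exact hcon z (hsub hz) y₁ hy₁
    have h2 := hd_cos k t
    have := h1.unique h2
    rcases mul_eq_zero.mp (by linarith : k * Real.sin (k*t) = 0) with h | h
    · exact absurd h hk
    · exact h
  have hcost : ∀ t ∈ Set.Ioo a b, Real.cos (k * t) = 0 := by
    intro t ht
    have h1 : HasDerivAt (fun y => Real.sin (k * y)) 0 t := by
      refine (hasDerivAt_const t 0).congr_of_eventuallyEq ?_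
      filter_upwards [isOpen_Ioo.mem_nhds ht] with z hz
      exact hsin z hz
    have := h1.unique (hd_sin k t)
    rcases mul_eq_zero.mp this.symm with h | h
    · exact absurd h hk
    · exact h
  obtain ⟨t, ht⟩ := Set.nonempty_Ioo.mpr hab
  have := Real.sin_sq_add_cos_sq (k * t)
  rw [hsin t ht, hcost t ht] at this
  norm_num at this
theorem stmt_18 (k : ℝ) (hk : k ≠ 0)
    (I J : Set ℝ) (hIopen : IsOpen I) (hIint : I.OrdConnected) (hIne : I.Nonempty)
    (hJopen : IsOpen J) (hJint : J.OrdConnected)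
    (hJnd : ∃ y₁ ∈ J, ∃ y₂ ∈ J, y₁ ≠ y₂)
    (F : ℝ × ℝ → ℝ) (hF : ContDiffOn ℝ 2 F (I ×ˢ J))
    (φ : ℝ → ℝ) (hφ : DifferentiableOn ℝ φ I)
    (hFx : ∀ x ∈ I, ∀ y ∈ J,
      deriv (fun s => F (s, y)) x = φ x * Real.cos (k * y))
    (hFy : ∀ x ∈ I, ∀ y ∈ J,
      deriv (fun t => F (x, t)) y = φ x * Real.sin (k * y)) :
    ∃ C₁ C₂ : ℝ,
      (∀ x ∈ I, φ x = -k * C₁ * Real.exp (-(k * x))) ∧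
      (∀ x ∈ I, ∀ y ∈ J, F (x, y) = C₁ * Real.exp (-(k * x)) * Real.cos (k * y) + C₂) := by
  obtain ⟨x₀, hx₀⟩ := hIne
  obtain ⟨y₁, hy₁, y₂, hy₂, hne⟩ := hJnd
  have hIconv : Convex ℝ I := convex_iff_ordConnected.mpr hIint
  have hJconv : Convex ℝ J := convex_iff_ordConnected.mpr hJint
  -- differentiability of F at points of I × J
  have hFd : ∀ p ∈ I ×ˢ J, DifferentiableAt ℝ F p := fun p hp =>
    (hF.differentiableOn (by norm_num)).differentiableAt ((hIopen.prod hJopen).mem_nhds hp)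
  -- partial derivatives as HasDerivAt
  have hpx : ∀ x ∈ I, ∀ y ∈ J, HasDerivAt (fun s => F (s, y)) (φ x * Real.cos (k * y)) x := by
    intro x hx y hy
    have h1 : DifferentiableAt ℝ (fun s : ℝ => F (s, y)) x :=
      (hFd (x, y) ⟨hx, hy⟩).comp x (differentiableAt_id.prodMk (differentiableAt_const y))
    exact hFx x hx y hy ▸ h1.hasDerivAt
  have hpy : ∀ x ∈ I, ∀ y ∈ J, HasDerivAt (fun t => F (x, t)) (φ x * Real.sin (k * y)) y := by
    intro x hx y hy
    have h1 : DifferentiableAt ℝ (fun t : ℝ => F (x, t)) y :=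
      (hFd (x, y) ⟨hx, hy⟩).comp y ((differentiableAt_const x).prodMk differentiableAt_id)
    exact hFy x hx y hy ▸ h1.hasDerivAt
  -- Step A: integrate in y
  have hA : ∀ x ∈ I, ∀ y ∈ J, ∀ y' ∈ J,
      F (x, y) + φ x * Real.cos (k * y) / k = F (x, y') + φ x * Real.cos (k * y') / k := by
    intro x hx y hy y' hy'
    refine const_of_deriv_zero' hJconv hJopen (f := fun t => F (x, t) + φ x * Real.cos (k * t) / k)
      ?_ hy hy'
    intro t ht
    have h1 := hpy x hx t ht
    have h2 : HasDerivAt (fun t => φ x * Real.cos (k * t) / k)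
        (φ x * (-k * Real.sin (k * t)) / k) t := ((hd_cos k t).const_mul (φ x)).div_const k
    have := h1.add h2
    refine this.congr_deriv ?_
    field_simp
    ring
  -- nondegeneracy: two points of J with different cos values
  obtain ⟨y₃, hy₃, y₄, hy₄, hcosne⟩ := cos_nonconst hk hJopen hJint hy₁ hy₂ hne
  set d : ℝ := Real.cos (k * y₃) - Real.cos (k * y₄) with hd_def
  have hd0 : d ≠ 0 := sub_ne_zero.mpr hcosne
  -- Step B: φ' = -k φ
  have hφ' : ∀ x ∈ I, HasDerivAt φ (-k * φ x) x := by
    intro x hx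
    have hdiff : DifferentiableAt ℝ φ x := hφ.differentiableAt (hIopen.mem_nhds hx)
    have hu : HasDerivAt (fun x' => F (x', y₃) - F (x', y₄)) (φ x * d) x := by
      have := (hpx x hx y₃ hy₃).sub (hpx x hx y₄ hy₄)
      rw [hd_def, mul_sub]; exact this
    have heq : HasDerivAt (fun x' => φ x' * (-d) / k) (φ x * d) x := by
      refine hu.congr_of_eventuallyEq ?_
      filter_upwards [hIopen.mem_nhds hx] with z hz
      have h := hA z hz y₃ hy₃ y₄ hy₄
      rw [hd_def]
      linear_combination (-1 : ℝ) * h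
    have h2 : HasDerivAt (fun x' => φ x' * (-d) / k) (deriv φ x * (-d) / k) x :=
      (hdiff.hasDerivAt.mul_const (-d)).div_const k
    have huniq := heq.unique h2
    have hval : deriv φ x = -k * φ x := by
      have h2 : (k * φ x + deriv φ x) * d = 0 := by
        have h1 : φ x * d = deriv φ x * (-d) / k := huniq
        field_simp at h1
        linear_combination d * h1
      rcases mul_eq_zero.mp h2 with h | h
      · linarith
      · exact absurd h hd0
    exact hval ▸ hdiff.hasDerivAt
  -- Step C: solve the ODE
  set A : ℝ := φ x₀ * Real.exp (k * x₀) with hA_def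
  have hψ : ∀ x ∈ I, φ x * Real.exp (k * x) = A := by
    intro x hx
    refine const_of_deriv_zero' hIconv hIopen (f := fun x => φ x * Real.exp (k * x)) ?_ hx hx₀
    intro t ht
    have := (hφ' t ht).mul (hd_exp k t)
    refine this.congr_deriv ?_
    ring
  have hexp : ∀ x : ℝ, Real.exp (-(k * x)) * Real.exp (k * x) = 1 := by
    intro x; rw [← Real.exp_add]; simp
  refine ⟨-A / k, F (x₀, y₁) - (-A / k) * Real.exp (-(k * x₀)) * Real.cos (k * y₁), ?_, ?_⟩
  · intro x hx
    have hA' : -k * (-A / k) * Real.exp (-(k * x)) = A * Real.exp (-(k * x)) := by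
      field_simp
    rw [hA']
    linear_combination Real.exp (-(k * x)) * hψ x hx - φ x * hexp x
  · intro x hx y hy
    set C₁ : ℝ := -A / k
    set C₂ : ℝ := F (x₀, y₁) - C₁ * Real.exp (-(k * x₀)) * Real.cos (k * y₁) with hC₂_def
    have hφx : ∀ x ∈ I, φ x = -k * C₁ * Real.exp (-(k * x)) := by
      intro x hx
      have hA' : -k * C₁ * Real.exp (-(k * x)) = A * Real.exp (-(k * x)) := by
        rw [show C₁ = -A / k from rfl]; field_simp
      rw [hA']
      linear_combination Real.exp (-(k * x)) * hψ x hx - φ x * hexp x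
    -- F(·, y₁) computed
    have h1 : F (x, y₁) = C₁ * Real.exp (-(k * x)) * Real.cos (k * y₁) + C₂ := by
      have hconst : F (x, y₁) - C₁ * Real.exp (-(k * x)) * Real.cos (k * y₁)
          = F (x₀, y₁) - C₁ * Real.exp (-(k * x₀)) * Real.cos (k * y₁) := by
        refine const_of_deriv_zero' hIconv hIopen
          (f := fun x => F (x, y₁) - C₁ * Real.exp (-(k * x)) * Real.cos (k * y₁)) ?_ hx hx₀
        intro t ht
        have hg : HasDerivAt (fun x => C₁ * Real.exp (-(k * x)) * Real.cos (k * y₁))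
            ((-k * C₁ * Real.exp (-(k * t))) * Real.cos (k * y₁)) t := by
          have hbase := hd_exp (-k) t
          simp only [neg_mul] at hbase
          have := (hbase.const_mul C₁).mul_const (Real.cos (k * y₁))
          refine this.congr_deriv ?_
          ring
        have := (hpx t ht y₁ hy₁).sub hg
        rw [hφx t ht] at this
        refine this.congr_deriv ?_
        ring
      rw [hC₂_def]; linarith
    -- combine with Step A
    have h2 := hA x hx y hy y₁ hy₁
    have hφk : φ x / k = -C₁ * Real.exp (-(k * x)) := by
      rw [hφx x hx]; field_simp
    have : F (x, y) = F (x, y₁) + φ x / k * (Real.cos (k * y₁) - Real.cos (k * y)) := by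
      linear_combination h2
    rw [this, h1, hφk]
    ring
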